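/- Let y : ℝ → ℝ be smooth and satisfy y^{(m)}(x) = ∑_{p=1}^{m} b_p(x)·y^{(m−p)}(x) for all x ∈ ℝ. Then for every natural number n and every x ∈ ℝ, y^{(m+n)}(x) = ∑_{p=1}^{m} α_p(n)(x)·y^{(m−p)}(x). -/

import Mathlib

/-- The `n`-image coefficients `α_p(n)` (for `1 ≤ p ≤ m`) of the linear ODE
`y⁽ᵐ⁾ = ∑_{p=1}^m b_p·y⁽ᵐ⁻ᵖ⁾`:
`α_p(0) = b_p`, `α_p(n+1) = (α_p(n))′ + α_{p+1}(n) + α₁(n)·b_p` for `1 ≤ p ≤ m−1`, and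
`α_m(n+1) = (α_m(n))′ + α₁(n)·b_m`. -/
noncomputable def alphaCoeff (m : ℕ) (b : ℕ → ℝ → ℝ) : ℕ → ℕ → ℝ → ℝ
  | 0, p => b p
  | n + 1, p => fun x =>
      deriv (alphaCoeff m b n p) x + (if p < m then alphaCoeff m b n (p + 1) x else 0)
        + alphaCoeff m b n 1 x * b p x

lemma alphaCoeff_smooth (m : ℕ) (b : ℕ → ℝ → ℝ)
    (hb : ∀ p ∈ Finset.Icc 1 m, ContDiff ℝ (⊤ : ℕ∞) (b p)) :
    ∀ n, ∀ p ∈ Finset.Icc 1 m, ContDiff ℝ (⊤ : ℕ∞) (alphaCoeff m b n p) := by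
  intro n
  induction n with
  | zero => intro p hp; exact hb p hp
  | succ n ih =>
    intro p hp
    simp only [Finset.mem_Icc] at hp
    have h1 : ContDiff ℝ (⊤ : ℕ∞) (deriv (alphaCoeff m b n p)) :=
      (contDiff_infty_iff_deriv.mp (ih p (by simp [hp.1, hp.2]))).2
    have h2 : ContDiff ℝ (⊤ : ℕ∞)
        (fun x => if p < m then alphaCoeff m b n (p + 1) x else 0) := by
      by_cases h : p < m
      · simp only [if_pos h]; exact ih (p + 1) (by simp; omega)
      · simp only [if_neg h]; exact contDiff_const
    have h3 : ContDiff ℝ (⊤ : ℕ∞) (fun x => alphaCoeff m b n 1 x * b p x) :=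
      (ih 1 (by simp; omega)).mul (hb p (by simp [hp.1, hp.2]))
    show ContDiff ℝ (⊤ : ℕ∞) (fun x => _)
    exact (h1.add h2).add h3

/-- If a smooth `y` satisfies `y⁽ᵐ⁾ = ∑_{p=1}^m b_p·y⁽ᵐ⁻ᵖ⁾`, then for every `n` and `x`,
`y⁽ᵐ⁺ⁿ⁾(x) = ∑_{p=1}^m α_p(n)(x)·y⁽ᵐ⁻ᵖ⁾(x)`. -/
theorem statement15 (m : ℕ) (hm : 1 ≤ m) (b : ℕ → ℝ → ℝ)
    (hb : ∀ p ∈ Finset.Icc 1 m, ContDiff ℝ (⊤ : ℕ∞) (b p))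
    (y : ℝ → ℝ) (hy : ContDiff ℝ (⊤ : ℕ∞) y)
    (hode : ∀ x : ℝ,
      iteratedDeriv m y x = ∑ p ∈ Finset.Icc 1 m, b p x * iteratedDeriv (m - p) y x)
    (n : ℕ) (x : ℝ) :
    iteratedDeriv (m + n) y x
      = ∑ p ∈ Finset.Icc 1 m, alphaCoeff m b n p x * iteratedDeriv (m - p) y x := by
  have hyk : ∀ k : ℕ, ContDiff ℝ (⊤ : ℕ∞) (iteratedDeriv k y) := by
    intro k
    rw [iteratedDeriv_eq_iterate]
    exact ContDiff.iterate_deriv k hy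
  induction n generalizing x with
  | zero =>
    simpa [alphaCoeff] using hode x
  | succ n ih =>
    have hstep : iteratedDeriv (m + (n + 1)) y = deriv (iteratedDeriv (m + n) y) := by
      rw [show m + (n + 1) = (m + n) + 1 by ring, iteratedDeriv_succ]
    have hfun : iteratedDeriv (m + n) y
        = fun x => ∑ p ∈ Finset.Icc 1 m, alphaCoeff m b n p x * iteratedDeriv (m - p) y x :=
      funext ih
    rw [hstep, hfun]
    have hdiff : ∀ p ∈ Finset.Icc 1 m,
        DifferentiableAt ℝ (fun x => alphaCoeff m b n p x * iteratedDeriv (m - p) y x) x := by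
      intro p hp
      exact ((alphaCoeff_smooth m b hb n p hp).differentiable (by simp) x).mul
        ((hyk (m - p)).differentiable (by simp) x)
    rw [deriv_fun_sum hdiff]
    have hterm : ∀ p ∈ Finset.Icc 1 m,
        deriv (fun x => alphaCoeff m b n p x * iteratedDeriv (m - p) y x) x
          = deriv (alphaCoeff m b n p) x * iteratedDeriv (m - p) y x
            + alphaCoeff m b n p x * iteratedDeriv (m - p + 1) y x := by
      intro p hp
      rw [deriv_fun_mul ((alphaCoeff_smooth m b hb n p hp).differentiable (by simp) x)
        ((hyk (m - p)).differentiable (by simp) x), ← iteratedDeriv_succ]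
    rw [Finset.sum_congr rfl hterm, Finset.sum_add_distrib]
    have hrhs : ∀ p ∈ Finset.Icc 1 m,
        alphaCoeff m b (n + 1) p x * iteratedDeriv (m - p) y x
          = deriv (alphaCoeff m b n p) x * iteratedDeriv (m - p) y x
            + ((if p < m then alphaCoeff m b n (p + 1) x else 0) * iteratedDeriv (m - p) y x
              + alphaCoeff m b n 1 x * (b p x * iteratedDeriv (m - p) y x)) := by
      intro p hp
      show (deriv (alphaCoeff m b n p) x + _ + _) * _ = _
      ring
    rw [Finset.sum_congr rfl hrhs, Finset.sum_add_distrib, Finset.sum_add_distrib]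
    congr 1
    -- ∑ α_p·y^{(m-p+1)} = ∑ ite·y^{(m-p)} + ∑ α₁·(b_p·y^{(m-p)})
    have hC : ∑ p ∈ Finset.Icc 1 m,
        alphaCoeff m b n 1 x * (b p x * iteratedDeriv (m - p) y x)
          = alphaCoeff m b n 1 x * iteratedDeriv m y x := by
      rw [← Finset.mul_sum, ← hode x]
    have hB : ∑ p ∈ Finset.Icc 1 m,
        (if p < m then alphaCoeff m b n (p + 1) x else 0) * iteratedDeriv (m - p) y x
          = ∑ p ∈ Finset.Icc 1 (m - 1),
            alphaCoeff m b n (p + 1) x * iteratedDeriv (m - p) y x := by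
      have hins : Finset.Icc 1 m = insert m (Finset.Icc 1 (m - 1)) := by
        ext a; simp; omega
      rw [hins, Finset.sum_insert (by simp; omega)]
      rw [if_neg (lt_irrefl m), zero_mul, zero_add]
      apply Finset.sum_congr rfl
      intro p hp
      simp only [Finset.mem_Icc] at hp
      rw [if_pos (by omega)]
    have hL : ∑ p ∈ Finset.Icc 1 m,
        alphaCoeff m b n p x * iteratedDeriv (m - p + 1) y x
          = alphaCoeff m b n 1 x * iteratedDeriv m y x
            + ∑ p ∈ Finset.Icc 1 (m - 1),
              alphaCoeff m b n (p + 1) x * iteratedDeriv (m - p) y x := by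
      have hins : Finset.Icc 1 m = insert 1 (Finset.Icc 2 m) := by
        ext a; simp; omega
      rw [hins, Finset.sum_insert (by simp)]
      congr 1
      · rw [show m - 1 + 1 = m by omega]
      · have hset : Finset.Icc 2 m = Finset.map (addRightEmbedding 1) (Finset.Icc 1 (m - 1)) := by
          rw [Finset.map_add_right_Icc]
          congr 1
          omega
        rw [hset, Finset.sum_map]
        apply Finset.sum_congr rfl
        intro p hp
        simp only [Finset.mem_Icc] at hp
        simp only [addRightEmbedding_apply]
        rw [show m - (p + 1) + 1 = m - p by omega]
    rw [hL, hB, hC]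
    ring
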